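/- There exists a constant C₀ ≥ 1, depending only on κ and d, such that for every C ≥ C₀ the following holds (Lemma 3.2, case of small initial data). Let d ≥ 1, κ > 1, U ≥ 1, t > 0, and write ⟨a⟩ = max(1,a). Let (R_n)_{n≥1} be an increasing sequence of reals with R_1 ≥ 1, R_{2i} − R_{2i-1} ≤ R_{2i-1}^{1/κ} and R_{2i+1} ≥ 4R_{2i} for all i ≥ 1. Let ũ₀ : ℝ^d → ℝ^d satisfy ‖ũ₀(x)‖ ≤ U(1+‖x‖)^{1/κ} for all x, and let u₀ : ℝ^d → ℝ^d be a Lipschitz function with u₀(x) = ũ₀(x) for every x whose norm does not lie in ⋃_{i≥1} [R_{2i-1}, R_{2i}]. Then every differentiable curve y : [0,t] → ℝ^d with y'(s) = u₀(y(s)) for all s ∈ [0,t] and ‖y(0)‖ ≤ 32·(16C⟨Ut⟩)^{κ/(κ-1)} satisfies ‖y(s) − y(0)‖ ≤ 96·(16C⟨Ut⟩)^{κ/(κ-1)} for all s ∈ [0,t]. -/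

import Mathlib

open Set Filter

lemma max_add_max_le {x y z : ℝ} (hx : x ≤ z) (hy : y ≤ z) (hxy : x + y ≤ z) :
    max 0 x + max 0 y ≤ max 0 z := by
  have hz : (0:ℝ) ≤ max 0 z := le_max_left _ _
  rcases le_total x 0 with h1 | h1 <;> rcases le_total y 0 with h2 | h2
  · rw [max_eq_left h1, max_eq_left h2]; linarith
  · rw [max_eq_left h1, max_eq_right h2]; exact by linarith [le_max_right (0:ℝ) z, hy]
  · rw [max_eq_right h1, max_eq_left h2]; exact by linarith [le_max_right (0:ℝ) z, hx]
  · rw [max_eq_right h1, max_eq_right h2]; exact by linarith [le_max_right (0:ℝ) z, hxy]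

lemma annLen_step {a b c r r' : ℝ} (hab : a ≤ b) (hbc : b ≤ c) :
    max 0 (min r' a - r) + max 0 (min r' c - max r b) ≤ max 0 (min r' c - r) := by
  have h1 : min r' a ≤ min r' c := min_le_min le_rfl (hab.trans hbc)
  have h2 : r ≤ max r b := le_max_left _ _
  have h3 : min r' a ≤ max r b := le_trans (min_le_right _ _) (hab.trans (le_max_right _ _))
  exact max_add_max_le (by linarith) (by linarith) (by linarith)

noncomputable def annLen (R : ℕ → ℝ) (i : ℕ) (r : ℝ) : ℝ :=
  max 0 (min r (R (2*i+2)) - R (2*i+1))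

noncomputable def annPhi (R : ℕ → ℝ) (N : ℕ) (r : ℝ) : ℝ :=
  r - ∑ i ∈ Finset.range N, annLen R i r

section
variable {R : ℕ → ℝ}

lemma Rle (hmono : ∀ n : ℕ, 1 ≤ n → R n < R (n+1)) :
    ∀ {m n : ℕ}, 1 ≤ m → m ≤ n → R m ≤ R n := by
  intro m n h1 hmn
  induction n, hmn using Nat.le_induction with
  | base => exact le_refl _
  | succ n hmn ih => exact ih.trans (hmono n (h1.trans hmn)).le

lemma annLen_nonneg (R : ℕ → ℝ) (i : ℕ) (r : ℝ) : 0 ≤ annLen R i r := le_max_left _ _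

lemma annLen_mono (R : ℕ → ℝ) (i : ℕ) {r r' : ℝ} (h : r ≤ r') :
    annLen R i r ≤ annLen R i r' := by
  unfold annLen; gcongr

lemma annLen_of_ge (hmono : ∀ n : ℕ, 1 ≤ n → R n < R (n+1)) (i : ℕ) {r : ℝ}
    (h : R (2*i+2) ≤ r) :
    annLen R i r = R (2*i+2) - R (2*i+1) := by
  have h2 : R (2*i+1) ≤ R (2*i+2) := (hmono (2*i+1) (by omega)).le
  unfold annLen
  rw [min_eq_right h, max_eq_right (by linarith)]

lemma annLen_of_le (R : ℕ → ℝ) (i : ℕ) {r : ℝ} (h : r ≤ R (2*i+1)) :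
    annLen R i r = 0 := by
  unfold annLen
  rw [max_eq_left]
  have : min r (R (2*i+2)) ≤ r := min_le_left _ _
  linarith

lemma annLen_le_width (hmono : ∀ n : ℕ, 1 ≤ n → R n < R (n+1)) (i : ℕ) (r : ℝ) :
    annLen R i r ≤ R (2*i+2) - R (2*i+1) := by
  have h2 : R (2*i+1) ≤ R (2*i+2) := (hmono (2*i+1) (by omega)).le
  unfold annLen
  have : min r (R (2*i+2)) ≤ R (2*i+2) := min_le_right _ _
  apply max_le <;> linarith

/-- P2: total increment bound -/
lemma sum_annLen_diff_le (hmono : ∀ n : ℕ, 1 ≤ n → R n < R (n+1)) (N : ℕ)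
    {r r' : ℝ} (h : r ≤ r') :
    ∑ i ∈ Finset.range N, annLen R i r' - ∑ i ∈ Finset.range N, annLen R i r
      ≤ max 0 (min r' (R (2*N+1)) - r) := by
  induction N with
  | zero => simp
  | succ n ih =>
      rw [Finset.sum_range_succ, Finset.sum_range_succ]
      have step : annLen R n r' - annLen R n r
          ≤ max 0 (min r' (R (2*n+2)) - max r (R (2*n+1))) := by
        unfold annLen
        rcases le_total (min r' (R (2*n+2)) - R (2*n+1)) 0 with hc | hc
        · have : annLen R n r' ≤ annLen R n r' := le_rfl
          have h0 : max 0 (min r' (R (2*n+2)) - R (2*n+1)) = 0 := max_eq_left hc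
          rw [h0]
          have := annLen_nonneg R n r
          have := le_max_left 0 (min r' (R (2*n+2)) - max r (R (2*n+1)))
          unfold annLen at *
          linarith
        · rw [max_eq_right hc]
          rcases le_total r (R (2*n+1)) with hr | hr
          · have h0 : max 0 (min r (R (2*n+2)) - R (2*n+1)) = 0 := by
              rw [max_eq_left]
              have : min r (R (2*n+2)) ≤ r := min_le_left _ _
              linarith
            rw [h0, max_eq_right hr]
            have : 0 ≤ min r' (R (2*n+2)) - R (2*n+1) := hc
            exact le_max_of_le_right (by linarith)
          · rw [max_eq_left hr]
            rcases le_total r (R (2*n+2)) with h4 | h4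
            · rw [min_eq_left h4, max_eq_right (by linarith)]
              have : min r' (R (2*n+2)) - r ≤ max 0 (min r' (R (2*n+2)) - r) :=
                le_max_right _ _
              linarith
            · have hm : min r' (R (2*n+2)) ≤ R (2*n+2) := min_le_right _ _
              rw [min_eq_right h4, min_eq_right (h4.trans h),
                max_eq_right (by linarith : (0:ℝ) ≤ R (2*n+2) - R (2*n+1))]
              have := le_max_left (0:ℝ) (R (2*n+2) - r)
              linarith
      have hstep2 : max 0 (min r' (R (2*n+1)) - r)
            + max 0 (min r' (R (2*n+2)) - max r (R (2*n+1)))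
          ≤ max 0 (min r' (R (2*n+3)) - r) := by
        have hab : R (2*n+1) ≤ R (2*n+1) := le_rfl
        have hbc : R (2*n+1) ≤ R (2*n+3) := Rle hmono (by omega) (by omega)
        have h23 : R (2*n+2) ≤ R (2*n+3) := (hmono (2*n+2) (by omega)).le
        calc max 0 (min r' (R (2*n+1)) - r)
              + max 0 (min r' (R (2*n+2)) - max r (R (2*n+1)))
            ≤ max 0 (min r' (R (2*n+1)) - r)
              + max 0 (min r' (R (2*n+3)) - max r (R (2*n+1))) := by
              gcongr
          _ ≤ max 0 (min r' (R (2*n+3)) - r) := annLen_step le_rfl hbc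
      have : 2*(n+1)+1 = 2*n+3 := by omega
      rw [this]
      linarith [ih]

end

/-- P5: annPhi monotone -/
lemma annPhi_mono (hmono : ∀ n : ℕ, 1 ≤ n → R n < R (n+1)) (N : ℕ)
    {r r' : ℝ} (h : r ≤ r') : annPhi R N r ≤ annPhi R N r' := by
  have h1 := sum_annLen_diff_le hmono N h
  have h2 : max 0 (min r' (R (2*N+1)) - r) ≤ max 0 (r' - r) :=
    max_le_max le_rfl (by linarith [min_le_left r' (R (2*N+1))])
  have h3 : max 0 (r' - r) = r' - r := max_eq_right (by linarith)
  unfold annPhi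
  linarith [h1.trans (h2.trans_eq h3)]

/-- annPhi 1-Lipschitz upper -/
lemma annPhi_lip (R : ℕ → ℝ) (N : ℕ) {r r' : ℝ} (h : r ≤ r') :
    annPhi R N r' - annPhi R N r ≤ r' - r := by
  unfold annPhi
  have : ∑ i ∈ Finset.range N, annLen R i r ≤ ∑ i ∈ Finset.range N, annLen R i r' :=
    Finset.sum_le_sum fun i _ => annLen_mono R i h
  linarith

lemma annPhi_abs (hmono : ∀ n : ℕ, 1 ≤ n → R n < R (n+1)) (N : ℕ) (r r' : ℝ) :
    |annPhi R N r' - annPhi R N r| ≤ |r' - r| := by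
  rcases le_total r r' with h | h
  · rw [abs_of_nonneg (by linarith [annPhi_mono hmono N h]),
        abs_of_nonneg (by linarith)]
    exact annPhi_lip R N h
  · rw [abs_of_nonpos (by linarith [annPhi_mono hmono N h]),
        abs_of_nonpos (by linarith)]
    linarith [annPhi_lip R N h]

lemma annPhi_le_self (R : ℕ → ℝ) (N : ℕ) (r : ℝ) : annPhi R N r ≤ r := by
  unfold annPhi
  have : 0 ≤ ∑ i ∈ Finset.range N, annLen R i r :=
    Finset.sum_nonneg fun i _ => annLen_nonneg R i r
  linarith

/-- P3: constancy on an annulus -/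
lemma annPhi_const (hmono : ∀ n : ℕ, 1 ≤ n → R n < R (n+1)) {N i : ℕ} (hiN : i < N)
    {a b : ℝ} (ha : R (2*i+1) ≤ a) (hab : a ≤ b) (hb : b ≤ R (2*i+2)) :
    annPhi R N b = annPhi R N a := by
  have key : ∀ j ∈ Finset.range N, j ≠ i → annLen R j b = annLen R j a := by
    intro j _ hj
    rcases lt_or_gt_of_ne hj with hji | hji
    · -- j < i : a ≥ R (2j+2)
      have h1 : R (2*j+2) ≤ R (2*i+1) := Rle hmono (by omega) (by omega)
      rw [annLen_of_ge hmono j (le_trans h1 (ha.trans hab)),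
          annLen_of_ge hmono j (le_trans h1 ha)]
    · -- j > i : b ≤ R (2j+1)
      have h1 : R (2*i+2) ≤ R (2*j+1) := Rle hmono (by omega) (by omega)
      rw [annLen_of_le R j (le_trans hb h1), annLen_of_le R j ((hab.trans hb).trans h1)]
  have hi : annLen R i b = annLen R i a + (b - a) := by
    unfold annLen
    rw [min_eq_left hb, min_eq_left (hab.trans hb),
        max_eq_right (by linarith), max_eq_right (by linarith)]
    ring
  have hmem : i ∈ Finset.range N := Finset.mem_range.mpr hiN
  have hsum : ∑ j ∈ Finset.range N, annLen R j b
      = ∑ j ∈ Finset.range N, annLen R j a + (b - a) := by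
    rw [← Finset.sum_erase_add _ _ hmem, ← Finset.sum_erase_add _ _ hmem,
        Finset.sum_congr rfl (fun j hjmem => key j (Finset.mem_of_mem_erase hjmem)
          (Finset.ne_of_mem_erase hjmem)), hi]
    ring
  unfold annPhi
  rw [hsum]; ring

/-- P4: covered length is geometrically small -/
lemma sum_annLen_le (hmono : ∀ n : ℕ, 1 ≤ n → R n < R (n+1)) (hR1 : 1 ≤ R 1)
    {κ : ℝ} (hκ : 1 < κ)
    (hwidth : ∀ n : ℕ, R (2*n+2) - R (2*n+1) ≤ (R (2*n+1)) ^ (1/κ))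
    (hsep : ∀ n : ℕ, 4 * R (2*n+2) ≤ R (2*n+3)) (N : ℕ) :
    ∀ r : ℝ, 0 ≤ r → ∑ i ∈ Finset.range N, annLen R i r
      ≤ (1 - (4:ℝ) ^ (-(1/κ)))⁻¹ * r ^ (1/κ) := by
  have hκ0 : 0 < 1/κ := by positivity
  set q : ℝ := (4:ℝ) ^ (-(1/κ)) with hq
  have hq1 : q < 1 := by
    rw [hq]
    exact Real.rpow_lt_one_of_one_lt_of_neg (by norm_num) (by linarith)
  have hq0 : 0 < q := Real.rpow_pos_of_pos (by norm_num) _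
  set c : ℝ := (1 - q)⁻¹ with hc
  have hc0 : 0 < c := by rw [hc]; exact inv_pos.mpr (by linarith)
  have hcq : c * q + 1 = c := by
    have h1 : c * (1 - q) = 1 := by
      rw [hc]; field_simp
      exact div_self (by linarith)
    linear_combination -h1
  have hRge1 : ∀ n : ℕ, 1 ≤ n → 1 ≤ R n := fun n hn => hR1.trans (Rle hmono le_rfl hn)
  induction N with
  | zero => intro r hr; simp; positivity
  | succ n ih =>
      intro r hr
      rw [Finset.sum_range_succ]
      rcases le_total r (R (2*n+1)) with h | h
      · rw [annLen_of_le R n h]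
        linarith [ih r hr]
      · -- r ≥ R (2n+1) ≥ 1
        have hr1 : (1:ℝ) ≤ r := (hRge1 (2*n+1) (by omega)).trans h
        have hsum : ∑ i ∈ Finset.range n, annLen R i r
            = ∑ i ∈ Finset.range n, annLen R i (r/4) := by
          apply Finset.sum_congr rfl
          intro i hi
          have hi' : i < n := Finset.mem_range.mp hi
          have h1 : R (2*i+2) ≤ R (2*n) := by
            rcases eq_or_lt_of_le (by omega : 2*i+2 ≤ 2*n) with he | hl
            · rw [he]
            · exact Rle hmono (by omega) (by omega)
          have h2 : 4 * R (2*n) ≤ R (2*n+1) := by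
            have hn1 : 1 ≤ n := by omega
            have : 2*n = 2*(n-1)+2 := by omega
            have := hsep (n-1)
            have e1 : 2*(n-1)+2 = 2*n := by omega
            have e2 : 2*(n-1)+3 = 2*n+1 := by omega
            rw [e1, e2] at this
            exact this
          have h3 : R (2*i+2) ≤ r/4 := by
            have : 4 * R (2*i+2) ≤ 4 * R (2*n) := by linarith
            linarith
          rw [annLen_of_ge hmono i (by linarith : R (2*i+2) ≤ r),
              annLen_of_ge hmono i h3]
        have hlen : annLen R n r ≤ r ^ (1/κ) := by
          have h1 : annLen R n r ≤ R (2*n+2) - R (2*n+1) := annLen_le_width hmono n r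
          have h2 := hwidth n
          have h3 : (R (2*n+1)) ^ (1/κ) ≤ r ^ (1/κ) :=
            Real.rpow_le_rpow (by linarith [hRge1 (2*n+1) (by omega : 1 ≤ 2*n+1)]) h
              (le_of_lt hκ0)
          linarith
        have hihq : ∑ i ∈ Finset.range n, annLen R i (r/4) ≤ c * (q * r ^ (1/κ)) := by
          have := ih (r/4) (by linarith)
          have he : (r/4) ^ (1/κ) = q * r ^ (1/κ) := by
            rw [Real.div_rpow (by linarith) (by norm_num), hq,
                Real.rpow_neg (by norm_num : (0:ℝ) ≤ 4)]
            ring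
          calc ∑ i ∈ Finset.range n, annLen R i (r/4) ≤ c * (r/4) ^ (1/κ) := this
            _ = c * (q * r ^ (1/κ)) := by rw [he]
        have hrp : (0:ℝ) ≤ r ^ (1/κ) := Real.rpow_nonneg (by linarith) _
        have heq : (r/4) ^ (1/κ) = q * r ^ (1/κ) := by
          rw [Real.div_rpow (by linarith) (by norm_num), hq,
              Real.rpow_neg (by norm_num : (0:ℝ) ≤ 4)]
          ring
        rw [hsum]
        nlinarith [hihq, hlen, hrp, hcq]


section
variable {E : Type*} [NormedAddCommGroup E] [NormedSpace ℝ E] {R : ℕ → ℝ}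

/-- approximate a non-open-annulus point by a fully-good point -/
lemma exists_good_approx (hmono : ∀ n : ℕ, 1 ≤ n → R n < R (n+1)) (hR1 : 1 ≤ R 1)
    {x : E} (hx : ∀ j : ℕ, ‖x‖ ∉ Set.Ioo (R (2*j+1)) (R (2*j+2))) {ε : ℝ} (hε : 0 < ε) :
    ∃ x' : E, ‖x' - x‖ ≤ ε ∧ ∀ j : ℕ, ‖x'‖ ∉ Set.Icc (R (2*j+1)) (R (2*j+2)) := by
  by_cases hgood : ∀ j : ℕ, ‖x‖ ∉ Set.Icc (R (2*j+1)) (R (2*j+2))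
  · exact ⟨x, by simp [hε.le], hgood⟩
  push_neg at hgood
  obtain ⟨j₀, hj₀⟩ := hgood
  have hend : ‖x‖ = R (2*j₀+1) ∨ ‖x‖ = R (2*j₀+2) := by
    rcases eq_or_lt_of_le hj₀.1 with h | h
    · exact Or.inl h.symm
    rcases eq_or_lt_of_le hj₀.2 with h2 | h2
    · exact Or.inr h2
    · exact absurd ⟨h, h2⟩ (hx j₀)
  have hxpos : 0 < ‖x‖ := by
    have : (1:ℝ) ≤ R (2*j₀+1) := hR1.trans (Rle hmono le_rfl (by omega))
    linarith [hj₀.1]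
  -- generic construction given a good radius r' close to ‖x‖
  have build : ∀ r' : ℝ, 0 ≤ r' → |r' - ‖x‖| ≤ ε →
      (∀ j : ℕ, r' ∉ Set.Icc (R (2*j+1)) (R (2*j+2))) →
      ∃ x' : E, ‖x' - x‖ ≤ ε ∧ ∀ j : ℕ, ‖x'‖ ∉ Set.Icc (R (2*j+1)) (R (2*j+2)) := by
    intro r' hr0 hrε hrgood
    refine ⟨(r' / ‖x‖) • x, ?_, ?_⟩
    · have : (r' / ‖x‖) • x - x = (r' / ‖x‖ - 1) • x := by
        rw [sub_smul, one_smul]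
      rw [this, norm_smul, Real.norm_eq_abs]
      have : |r' / ‖x‖ - 1| * ‖x‖ = |r' - ‖x‖| := by
        rw [← abs_of_pos hxpos, ← abs_mul]
        congr 1
        field_simp
        rw [abs_of_pos hxpos]; ring
      rw [this]; exact hrε
    · intro j
      have : ‖(r' / ‖x‖) • x‖ = r' := by
        rw [norm_smul, Real.norm_eq_abs, abs_of_nonneg (by positivity)]
        field_simp
      rw [this]; exact hrgood j
  rcases hend with hbot | htop
  · -- bottom endpoint
    set glow : ℝ := if j₀ = 0 then 0 else R (2*j₀) with hglow
    have hglow_lt : glow < ‖x‖ := by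
      rw [hglow]
      split_ifs with h0
      · linarith
      · rw [hbot]
        have : 1 ≤ 2*j₀ := by omega
        exact hmono (2*j₀) this
    have hglow_nonneg : 0 ≤ glow := by
      rw [hglow]; split_ifs with h0
      · exact le_refl _
      · have : (1:ℝ) ≤ R (2*j₀) := hR1.trans (Rle hmono le_rfl (by omega))
        linarith
    set δ : ℝ := min ε ((‖x‖ - glow)/2) with hδ
    have hδpos : 0 < δ := lt_min hε (by linarith)
    set r' : ℝ := ‖x‖ - δ with hr'
    have hδle : δ ≤ (‖x‖ - glow)/2 := min_le_right _ _
    have h1 : glow < r' := by rw [hr']; linarith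
    have h2 : r' < ‖x‖ := by rw [hr']; linarith
    refine build r' (by linarith) ?_ ?_
    · rw [hr', abs_of_nonpos (by linarith)]
      have : δ ≤ ε := min_le_left _ _
      linarith
    · intro j hmem
      rcases le_or_gt j₀ j with hj | hj
      · have : R (2*j₀+1) ≤ R (2*j+1) := by
          rcases eq_or_lt_of_le hj with he | hl
          · rw [he]
          · exact Rle hmono (by omega) (by omega)
        rw [← hbot] at this
        linarith [hmem.1]
      · have hj₀pos : j₀ ≠ 0 := by omega
        have hgl : glow = R (2*j₀) := by rw [hglow, if_neg hj₀pos]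
        have : R (2*j+2) ≤ R (2*j₀) := by
          rcases eq_or_lt_of_le (by omega : 2*j+2 ≤ 2*j₀) with he | hl
          · rw [he]
          · exact Rle hmono (by omega) (by omega)
        rw [← hgl] at this
        linarith [hmem.2]
  · -- top endpoint
    have hnext : ‖x‖ < R (2*j₀+3) := by
      rw [htop]; exact hmono (2*j₀+2) (by omega)
    set δ : ℝ := min ε ((R (2*j₀+3) - ‖x‖)/2) with hδ
    have hδpos : 0 < δ := lt_min hε (by linarith)
    set r' : ℝ := ‖x‖ + δ with hr'
    have hδle : δ ≤ (R (2*j₀+3) - ‖x‖)/2 := min_le_right _ _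
    have h1 : ‖x‖ < r' := by rw [hr']; linarith
    have h2 : r' < R (2*j₀+3) := by rw [hr']; linarith
    refine build r' (by linarith) ?_ ?_
    · rw [hr', abs_of_nonneg (by linarith)]
      have : δ ≤ ε := min_le_left _ _
      linarith
    · intro j hmem
      rcases le_or_gt j j₀ with hj | hj
      · have : R (2*j+2) ≤ R (2*j₀+2) := by
          rcases eq_or_lt_of_le (by omega : 2*j+2 ≤ 2*j₀+2) with he | hl
          · rw [he]
          · exact Rle hmono (by omega) (by omega)
        rw [← htop] at this
        linarith [hmem.2]
      · have : R (2*j₀+3) ≤ R (2*j+1) := by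
          rcases eq_or_lt_of_le (by omega : 2*j₀+3 ≤ 2*j+1) with he | hl
          · rw [he]
          · exact Rle hmono (by omega) (by omega)
        linarith [hmem.1]

lemma u_bound (hmono : ∀ n : ℕ, 1 ≤ n → R n < R (n+1)) (hR1 : 1 ≤ R 1)
    {κ U : ℝ} (hκ : 1 < κ) (hU : 0 ≤ U)
    {v₀ u₀ : E → E} (hv : ∀ x, ‖v₀ x‖ ≤ U * (1 + ‖x‖) ^ (1/κ))
    {L : NNReal} (hL : LipschitzWith L u₀)
    (hmatch : ∀ x : E, (∀ j : ℕ, ‖x‖ ∉ Set.Icc (R (2*j+1)) (R (2*j+2))) → u₀ x = v₀ x)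
    {x : E} (hx : ∀ j : ℕ, ‖x‖ ∉ Set.Ioo (R (2*j+1)) (R (2*j+2))) :
    ‖u₀ x‖ ≤ U * (1 + ‖x‖) ^ (1/κ) := by
  have main : ∀ ε : ℝ, 0 < ε → ‖u₀ x‖ ≤ U * (1 + ‖x‖ + ε) ^ (1/κ) + L * ε := by
    intro ε hε
    obtain ⟨x', hx'close, hx'good⟩ := exists_good_approx hmono hR1 hx hε
    have h1 : ‖u₀ x - u₀ x'‖ ≤ L * ε := by
      have := hL.dist_le_mul x x'
      rw [dist_eq_norm, dist_eq_norm] at this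
      have h2 : ‖x - x'‖ ≤ ε := by
        rw [← norm_neg]; simpa using hx'close
      calc ‖u₀ x - u₀ x'‖ ≤ L * ‖x - x'‖ := this
        _ ≤ L * ε := by
          have : (0:ℝ) ≤ L := L.coe_nonneg
          nlinarith
    have h3 : ‖u₀ x'‖ ≤ U * (1 + ‖x‖ + ε) ^ (1/κ) := by
      rw [hmatch x' hx'good]
      refine (hv x').trans ?_
      have hxx : ‖x'‖ ≤ ‖x‖ + ε := by
        calc ‖x'‖ = ‖x + (x' - x)‖ := by rw [add_sub_cancel]
          _ ≤ ‖x‖ + ‖x' - x‖ := norm_add_le _ _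
          _ ≤ ‖x‖ + ε := by linarith
      have := Real.rpow_le_rpow (by positivity) (by linarith : 1 + ‖x'‖ ≤ 1 + ‖x‖ + ε)
        (by positivity : (0:ℝ) ≤ 1/κ)
      nlinarith [this]
    have h4 : ‖u₀ x‖ - ‖u₀ x'‖ ≤ ‖u₀ x - u₀ x'‖ := norm_sub_norm_le _ _
    linarith
  have hF : ContinuousAt (fun ε : ℝ => U * (1 + ‖x‖ + ε) ^ (1/κ) + L * ε) 0 := by
    have h1 : ContinuousAt (fun ε : ℝ => 1 + ‖x‖ + ε) 0 := by fun_prop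
    have h2 : ContinuousAt (fun z : ℝ => z ^ (1/κ)) (1 + ‖x‖ + 0) :=
      Real.continuousAt_rpow_const _ _ (Or.inl (by positivity))
    exact ((continuousAt_const.mul (h2.comp h1)).add
      (continuousAt_const.mul continuousAt_id))
  have htend : Tendsto (fun ε : ℝ => U * (1 + ‖x‖ + ε) ^ (1/κ) + L * ε) (nhdsWithin 0 (Set.Ioi 0))
      (nhds (U * (1 + ‖x‖) ^ (1/κ))) := by
    have h := hF.tendsto.mono_left (nhdsWithin_le_nhds (s := Set.Ioi (0:ℝ)))
    simpa using h
  exact ge_of_tendsto htend (eventually_mem_nhdsWithin.mono fun ε hε => main ε hε)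

end


set_option maxHeartbeats 1000000 in
lemma final_arith {κ C U t : ℝ} (hκ : 1 < κ) (hU : 1 ≤ U) (ht : 0 < t)
    (hC : max 1 (1 - (4:ℝ)^(-(1/κ)))⁻¹ ≤ C) :
    (U * (1 + 2*(32*(16*C*max 1 (U*t))^(κ/(κ-1))))^(1/κ) + 1) * t
      + (1 - (4:ℝ)^(-(1/κ)))⁻¹ * (2*(32*(16*C*max 1 (U*t))^(κ/(κ-1))))^(1/κ)
      < 32*(16*C*max 1 (U*t))^(κ/(κ-1)) := by
  have hκ0 : 0 < 1/κ := by positivity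
  have hκ1 : 1/κ ≤ 1 := by
    rw [div_le_one (by linarith)]; linarith
  set c' : ℝ := (1 - (4:ℝ)^(-(1/κ)))⁻¹ with hc'
  clear_value c'
  have hq1 : (4:ℝ)^(-(1/κ)) < 1 :=
    Real.rpow_lt_one_of_one_lt_of_neg (by norm_num) (by linarith)
  have hc'pos : 0 < c' := by rw [hc']; exact inv_pos.mpr (by linarith)
  have hC1 : 1 ≤ C := (le_max_left _ _).trans hC
  have hc'C : c' ≤ C := (le_max_right _ _).trans hC
  set mx : ℝ := max 1 (U*t) with hmx
  clear_value mx
  have hmx1 : 1 ≤ mx := hmx ▸ le_max_left _ _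
  have hUt : U*t ≤ mx := hmx ▸ le_max_right _ _
  set K : ℝ := 16*C*mx with hK
  clear_value K
  have hK16 : 16 ≤ K := by rw [hK]; nlinarith
  have hK0 : 0 < K := by linarith
  set β : ℝ := κ/(κ-1) with hβ
  clear_value β
  have hβ1 : 1 ≤ β := by
    rw [hβ, le_div_iff₀ (by linarith)]; linarith
  set P : ℝ := K ^ β with hP
  clear_value P
  have hKP : K ≤ P := by
    calc K = K ^ (1:ℝ) := (Real.rpow_one K).symm
      _ ≤ K ^ β := Real.rpow_le_rpow_of_exponent_le (by linarith) hβ1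
      _ = P := hP.symm
  have hP16 : 16 ≤ P := hK16.trans hKP
  have hP0 : 0 < P := by linarith
  -- P^(1/κ) = P / K
  have hβκ : β * (1/κ) = β - 1 := by
    have h1 : κ ≠ 0 := by linarith
    have h2 : κ - 1 ≠ 0 := by linarith
    rw [hβ]; field_simp; ring
  have hPκ : P ^ (1/κ) = P / K := by
    rw [hP, ← Real.rpow_mul hK0.le, hβκ, Real.rpow_sub hK0, Real.rpow_one]
  have hPκ0 : 0 ≤ P ^ (1/κ) := Real.rpow_nonneg (by linarith) _
  -- bound on (1+2M)^(1/κ), M = 32 P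
  set M : ℝ := 32 * P with hM
  clear_value M
  have hM0 : 0 < M := by rw [hM]; linarith
  have h65 : (1:ℝ) + 2*M ≤ 65*P := by rw [hM]; linarith
  have hA : (1 + 2*M) ^ (1/κ) ≤ 65 * (P/K) := by
    calc (1 + 2*M) ^ (1/κ) ≤ (65*P) ^ (1/κ) :=
          Real.rpow_le_rpow (by linarith) h65 hκ0.le
      _ = 65 ^ (1/κ) * P ^ (1/κ) := Real.mul_rpow (by norm_num) (by linarith)
      _ ≤ 65 * P ^ (1/κ) := by
          have : (65:ℝ) ^ (1/κ) ≤ 65 ^ (1:ℝ) :=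
            Real.rpow_le_rpow_of_exponent_le (by norm_num) hκ1
          rw [Real.rpow_one] at this
          nlinarith
      _ = 65 * (P/K) := by rw [hPκ]
  have hA0 : 0 ≤ (1 + 2*M) ^ (1/κ) := Real.rpow_nonneg (by linarith) _
  -- U t ≤ K/(16 C)
  have hUtK : U*t ≤ K/(16*C) := by
    rw [hK, le_div_iff₀ (by positivity)]
    nlinarith
  have hUt0 : 0 < U*t := by nlinarith
  -- V t ≤ 5 P
  have hVt : U * (1 + 2*M)^(1/κ) * t ≤ 5*P := by
    have h1 : (U*t) * ((1+2*M)^(1/κ)) ≤ (K/(16*C)) * (65*(P/K)) :=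
      mul_le_mul hUtK hA hA0 (by positivity)
    have h2 : (K/(16*C)) * (65*(P/K)) = 65*P/(16*C) := by
      field_simp
    have h3 : 65*P/(16*C) ≤ 5*P := by
      rw [div_le_iff₀ (by positivity)]
      have h4 : P*1 ≤ P*C := mul_le_mul_of_nonneg_left hC1 hP0.le
      linarith
    have h5 : U * (1 + 2*M)^(1/κ) * t = (U*t) * ((1+2*M)^(1/κ)) := by ring
    rw [h2] at h1
    rw [h5]
    linarith
  -- t ≤ P
  have htP : t ≤ P := by
    have h6 : K/(16*C) ≤ K := by
      rw [div_le_iff₀ (by positivity)]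
      have h7 : K*1 ≤ K*(16*C) := mul_le_mul_of_nonneg_left (by linarith) hK0.le
      linarith
    have htU : t ≤ U*t := by nlinarith [mul_le_mul_of_nonneg_right hU ht.le]
    linarith
  -- covered-length bound
  have hcov : c' * (2*M) ^ (1/κ) ≤ 4*P := by
    have h1 : (2*M : ℝ) = 64*P := by rw [hM]; ring
    have h2 : (2*M) ^ (1/κ) ≤ 64 * (P/K) := by
      rw [h1]
      calc (64*P) ^ (1/κ) = 64 ^ (1/κ) * P ^ (1/κ) :=
            Real.mul_rpow (by norm_num) (by linarith)
        _ ≤ 64 * P ^ (1/κ) := by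
            have : (64:ℝ) ^ (1/κ) ≤ 64 ^ (1:ℝ) :=
              Real.rpow_le_rpow_of_exponent_le (by norm_num) hκ1
            rw [Real.rpow_one] at this
            nlinarith
        _ = 64 * (P/K) := by rw [hPκ]
    have h3 : 64 * (P/K) ≤ 4*P/C := by
      rw [show (64:ℝ)*(P/K) = 64*P/K from by ring,
        div_le_div_iff₀ hK0 (by linarith : (0:ℝ) < C), hK]
      nlinarith [mul_pos hP0 (show (0:ℝ) < C by linarith), hmx1,
        mul_le_mul_of_nonneg_left hmx1 (mul_pos hP0 (show (0:ℝ) < C by linarith)).le]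
    have h4 : c' * (2*M)^(1/κ) ≤ C * (4*P/C) := by
      apply mul_le_mul hc'C (h2.trans h3) (Real.rpow_nonneg (by linarith) _) (by linarith)
    have h5 : C * (4*P/C) = 4*P := by field_simp
    linarith [h4, h5.le]
  -- conclusion
  have hineq : (U * (1 + 2*M)^(1/κ) + 1) * t + c' * (2*M)^(1/κ) < M := by
    have : (U * (1 + 2*M)^(1/κ) + 1) * t = U * (1+2*M)^(1/κ) * t + t := by ring
    rw [this]
    linarith
  exact hineq
theorem small_initial_data_displacement_bound (d : ℕ) (hd : 1 ≤ d) (κ : ℝ)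
    (hκ : 1 < κ) :
    ∃ C₀ : ℝ, 1 ≤ C₀ ∧
      ∀ C : ℝ, C₀ ≤ C →
        ∀ U t : ℝ, 1 ≤ U → 0 < t →
          ∀ R : ℕ → ℝ, 1 ≤ R 1 →
            (∀ n : ℕ, 1 ≤ n → R n < R (n + 1)) →
            (∀ i : ℕ, 1 ≤ i → R (2 * i) - R (2 * i - 1) ≤ (R (2 * i - 1)) ^ (1 / κ)) →
            (∀ i : ℕ, 1 ≤ i → 4 * R (2 * i) ≤ R (2 * i + 1)) →
            ∀ v₀ u₀ : EuclideanSpace ℝ (Fin d) → EuclideanSpace ℝ (Fin d),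
              (∀ x, ‖v₀ x‖ ≤ U * (1 + ‖x‖) ^ (1 / κ)) →
              (∃ L : NNReal, LipschitzWith L u₀) →
              (∀ x, (∀ i : ℕ, 1 ≤ i →
                  ‖x‖ ∉ Set.Icc (R (2 * i - 1)) (R (2 * i))) → u₀ x = v₀ x) →
              ∀ y : ℝ → EuclideanSpace ℝ (Fin d),
                (∀ s ∈ Set.Icc (0 : ℝ) t, HasDerivAt y (u₀ (y s)) s) →
                ‖y 0‖ ≤ 32 * (16 * C * max 1 (U * t)) ^ (κ / (κ - 1)) →
                ∀ s ∈ Set.Icc (0 : ℝ) t,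
                  ‖y s - y 0‖ ≤ 96 * (16 * C * max 1 (U * t)) ^ (κ / (κ - 1)) := by
  classical
  refine ⟨max 1 (1 - (4:ℝ)^(-(1/κ)))⁻¹, le_max_left _ _, ?_⟩
  intro C hC U t hU ht R hR1 hmono hwidth hsep v₀ u₀ hv hLip hmatch y hy hy0
  obtain ⟨L, hL⟩ := hLip
  have hU0 : (0:ℝ) ≤ U := by linarith
  -- shifted hypotheses
  have hwidth' : ∀ n : ℕ, R (2*n+2) - R (2*n+1) ≤ (R (2*n+1)) ^ (1/κ) := by
    intro n
    have h := hwidth (n+1) (by omega)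
    have e2 : 2*(n+1) - 1 = 2*n+1 := by omega
    have e1 : 2*(n+1) = 2*n+2 := by omega
    rw [e2, e1] at h
    exact h
  have hsep' : ∀ n : ℕ, 4 * R (2*n+2) ≤ R (2*n+3) := by
    intro n
    have h := hsep (n+1) (by omega)
    have e1 : 2*(n+1) = 2*n+2 := by omega
    rw [e1] at h
    exact h
  have hmatch' : ∀ x : EuclideanSpace ℝ (Fin d),
      (∀ j : ℕ, ‖x‖ ∉ Set.Icc (R (2*j+1)) (R (2*j+2))) → u₀ x = v₀ x := by
    intro x hx
    apply hmatch x
    intro i hi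
    obtain ⟨j, rfl⟩ : ∃ j, i = j + 1 := ⟨i - 1, by omega⟩
    have e1 : 2*(j+1) - 1 = 2*j+1 := by omega
    have e2 : 2*(j+1) = 2*j+2 := by omega
    rw [e1, e2]
    exact hx j
  set c' : ℝ := (1 - (4:ℝ)^(-(1/κ)))⁻¹ with hc'
  set P : ℝ := (16 * C * max 1 (U * t)) ^ (κ / (κ - 1)) with hP
  have hC1 : 1 ≤ C := le_trans (le_max_left _ _) hC
  have hP1 : 1 ≤ P := by
    rw [hP]
    apply Real.one_le_rpow
    · nlinarith [le_max_left (1:ℝ) (U*t)]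
    · have h1 : (0:ℝ) < κ - 1 := by linarith
      positivity
  -- reduce to the norm bound
  suffices hnorm : ∀ s' ∈ Set.Icc (0:ℝ) t, ‖y s'‖ ≤ 2*(32*P) by
    intro s hs
    have h1 := hnorm s hs
    have h2 : ‖y s - y 0‖ ≤ ‖y s‖ + ‖y 0‖ := norm_sub_le _ _
    calc ‖y s - y 0‖ ≤ 2*(32*P) + 32*P := by linarith
      _ = 96 * P := by ring
  by_contra hcon
  push_neg at hcon
  obtain ⟨s₀, hs₀mem, hs₀⟩ := hcon
  have ycont : ∀ x ∈ Set.Icc (0:ℝ) t, ContinuousAt y x := fun x hx => (hy x hx).continuousAt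
  have ρcont : ∀ x ∈ Set.Icc (0:ℝ) t, ContinuousAt (fun s' => ‖y s'‖) x :=
    fun x hx => (ycont x hx).norm
  set E : Set ℝ := Set.Icc 0 t ∩ (fun s' => ‖y s'‖) ⁻¹' Set.Ici (2*(32*P)) with hE
  have hEne : E.Nonempty := ⟨s₀, hs₀mem, hs₀.le⟩
  have hEbdd : BddBelow E := ⟨0, fun z hz => hz.1.1⟩
  have hEclosed : IsClosed E :=
    ContinuousOn.preimage_isClosed_of_isClosed
      (fun x hx => (ρcont x hx).continuousWithinAt) isClosed_Icc isClosed_Ici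
  set τ : ℝ := sInf E with hτ
  have hτE : τ ∈ E := hEclosed.csInf_mem hEne hEbdd
  have hτ0 : 0 ≤ τ := hτE.1.1
  have hτt : τ ≤ t := hτE.1.2
  have hρτ : 2*(32*P) ≤ ‖y τ‖ := hτE.2
  have hτpos : 0 < τ := by
    rcases eq_or_lt_of_le hτ0 with h | h
    · exfalso
      rw [← h] at hρτ
      linarith
    · exact h
  have hlt : ∀ x ∈ Set.Ico (0:ℝ) τ, ‖y x‖ < 2*(32*P) := by
    intro x hx
    by_contra h
    push_neg at h
    have hxE : x ∈ E := ⟨⟨hx.1, hx.2.le.trans hτt⟩, h⟩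
    exact absurd (csInf_le hEbdd hxE) (not_le.mpr hx.2)
  have hρτ_le : ‖y τ‖ ≤ 2*(32*P) := by
    have htd : Tendsto (fun s' => ‖y s'‖) (nhdsWithin τ (Set.Iio τ)) (nhds ‖y τ‖) :=
      (ρcont τ ⟨hτ0, hτt⟩).tendsto.mono_left nhdsWithin_le_nhds
    refine le_of_tendsto htd ?_
    filter_upwards [Ioo_mem_nhdsLT hτpos] with x hx
    exact (hlt x ⟨hx.1.le, hx.2⟩).le
  obtain ⟨N, hN⟩ := pow_unbounded_of_one_lt (2*(32*P)) (show (1:ℝ) < 4 by norm_num)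
  have hpow : ∀ i : ℕ, (4:ℝ)^i ≤ R (2*i+1) := by
    intro i
    induction i with
    | zero => simpa using hR1
    | succ n ih =>
        have h1 : R (2*n+1) ≤ R (2*n+2) := (hmono _ (by omega)).le
        have h2 := hsep' n
        have e : 2*(n+1)+1 = 2*n+3 := by omega
        rw [e]
        have h3 : (4:ℝ) * 4^n ≤ 4 * R (2*n+1) := by linarith
        calc (4:ℝ)^(n+1) = 4 * 4^n := by ring
          _ ≤ 4 * R (2*n+2) := by linarith
          _ ≤ R (2*n+3) := h2
  set V : ℝ := U * (1 + 2*(32*P)) ^ (1/κ) with hV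
  have hV0 : 0 ≤ V := by
    rw [hV]
    have : (0:ℝ) ≤ (1 + 2*(32*P)) ^ (1/κ) := Real.rpow_nonneg (by linarith) _
    nlinarith
  set ψ : ℝ → ℝ := fun x => annPhi R N ‖y x‖ with hψ
  have hphiC : Continuous (annPhi R N) := by
    unfold annPhi annLen
    exact continuous_id.sub (continuous_finset_sum _ fun i _ =>
      continuous_const.max ((continuous_id.min continuous_const).sub continuous_const))
  have hf : ContinuousOn ψ (Set.Icc 0 τ) := by
    intro x hx
    exact ((hphiC.continuousAt).comp (ρcont x ⟨hx.1, hx.2.trans hτt⟩)).continuousWithinAt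
  have hf' : ∀ x ∈ Set.Ico (0:ℝ) τ, ∀ r, V < r →
      ∃ᶠ z in nhdsWithin x (Set.Ioi x), slope ψ x z < r := by
    intro x hx r hr
    have hxIcc : x ∈ Set.Icc (0:ℝ) t := ⟨hx.1, hx.2.le.trans hτt⟩
    by_cases hann : ∃ j : ℕ, ‖y x‖ ∈ Set.Ioo (R (2*j+1)) (R (2*j+2))
    · obtain ⟨j, hj⟩ := hann
      have hjN : j < N := by
        by_contra hjN
        push_neg at hjN
        have h1 : (4:ℝ)^N ≤ (4:ℝ)^j := pow_le_pow_right₀ (by norm_num) hjN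
        have h2 := hpow j
        have h3 := hlt x hx
        have h4 := hj.1
        linarith
      have hev0 : (fun s' => ‖y s'‖) ⁻¹' Set.Ioo (R (2*j+1)) (R (2*j+2)) ∈ nhds x :=
        ρcont x hxIcc (isOpen_Ioo.mem_nhds hj)
      apply Filter.Eventually.frequently
      have hev : ∀ᶠ z in nhdsWithin x (Set.Ioi x),
          ‖y z‖ ∈ Set.Ioo (R (2*j+1)) (R (2*j+2)) :=
        Filter.eventually_iff.mpr (nhdsWithin_le_nhds hev0)
      filter_upwards [hev] with z hz
      have heq : ψ z = ψ x := by
        rw [hψ]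
        rcases le_total ‖y x‖ ‖y z‖ with h | h
        · exact annPhi_const hmono hjN hj.1.le h hz.2.le
        · exact (annPhi_const hmono hjN hz.1.le h hj.2.le).symm
      rw [slope_def_field, heq, sub_self, zero_div]
      linarith
    · push_neg at hann
      have hub : ‖u₀ (y x)‖ ≤ V := by
        have h1 := u_bound hmono hR1 hκ hU0 hv hL hmatch' hann
        have h2 : (1 + ‖y x‖) ^ (1/κ) ≤ (1 + 2*(32*P)) ^ (1/κ) :=
          Real.rpow_le_rpow (by positivity) (by linarith [(hlt x hx)]) (by positivity)
        calc ‖u₀ (y x)‖ ≤ U * (1 + ‖y x‖) ^ (1/κ) := h1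
          _ ≤ V := by rw [hV]; nlinarith
      have hder := hy x hxIcc
      have hslope : Tendsto (fun z => ‖slope y x z‖) (nhdsWithin x (Set.Ioi x))
          (nhds ‖u₀ (y x)‖) := by
        have h1 := (hasDerivAt_iff_tendsto_slope.mp hder).norm
        exact h1.mono_left (nhdsWithin_mono x fun z hz => ne_of_gt hz)
      have h1 : ∀ᶠ z in nhdsWithin x (Set.Ioi x), ‖slope y x z‖ < r :=
        hslope.eventually_lt_const (lt_of_le_of_lt hub hr)
      apply Filter.Eventually.frequently
      filter_upwards [h1, eventually_mem_nhdsWithin] with z hz hz'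
      have hzx : (0:ℝ) < z - x := sub_pos.mpr hz'
      have hnum : ψ z - ψ x ≤ ‖y z - y x‖ := by
        have h2 := annPhi_abs hmono N ‖y x‖ ‖y z‖
        have h3 : |‖y z‖ - ‖y x‖| ≤ ‖y z - y x‖ := abs_norm_sub_norm_le _ _
        calc ψ z - ψ x ≤ |ψ z - ψ x| := le_abs_self _
          _ ≤ |‖y z‖ - ‖y x‖| := h2
          _ ≤ ‖y z - y x‖ := h3
      have hns : ‖slope y x z‖ = ‖y z - y x‖ / (z - x) := by
        have hsl : slope y x z = (z - x)⁻¹ • (y z - y x) := by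
          rw [slope, vsub_eq_sub]
        rw [hsl, norm_smul, Real.norm_eq_abs, abs_of_pos (inv_pos.mpr hzx),
          inv_mul_eq_div]
      have hsl2 : slope ψ x z ≤ ‖slope y x z‖ := by
        rw [slope_def_field, hns]
        gcongr
      linarith
  have hBder : ∀ z : ℝ, HasDerivAt (fun s' => ψ 0 + (V+1)*s') (V+1) z := by
    intro z
    simpa using ((hasDerivAt_id z).const_mul (V+1)).const_add (ψ 0)
  have key : ψ τ ≤ ψ 0 + (V+1)*τ := by
    have h := image_le_of_liminf_slope_right_lt_deriv_boundary (f := ψ)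
      (f' := fun _ => V) (a := 0) (b := τ) (B := fun s' => ψ 0 + (V+1)*s')
      (B' := fun _ => V+1) hf hf' (by simp) hBder (fun x _ _ => by show V < V + 1; linarith)
      (Set.right_mem_Icc.mpr hτ0)
    exact h
  -- covered length bound at τ
  have hcov := sum_annLen_le hmono hR1 hκ hwidth' hsep' N ‖y τ‖ (norm_nonneg _)
  have hψτ : ‖y τ‖ - ψ τ ≤ c' * ‖y τ‖ ^ (1/κ) := by
    have hdef : ψ τ = ‖y τ‖ - ∑ i ∈ Finset.range N, annLen R i ‖y τ‖ := rfl
    rw [hc']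
    linarith
  have hψ0 : ψ 0 ≤ 32*P := le_trans (annPhi_le_self R N ‖y 0‖) hy0
  have hρκ : ‖y τ‖ ^ (1/κ) ≤ (2*(32*P)) ^ (1/κ) :=
    Real.rpow_le_rpow (norm_nonneg _) hρτ_le (by positivity)
  have harith : (V+1)*t + c' * (2*(32*P)) ^ (1/κ) < 32*P := by
    have h := final_arith hκ hU ht hC
    rw [← hP, ← hc', ← hV] at h
    exact h
  have hτle : (V+1)*τ ≤ (V+1)*t := mul_le_mul_of_nonneg_left hτt (by linarith)
  have hc'pos : 0 < c' := by
    rw [hc']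
    have hq1 : (4:ℝ)^(-(1/κ)) < 1 :=
      Real.rpow_lt_one_of_one_lt_of_neg (by norm_num) (by
        have h1 : (0:ℝ) < 1/κ := by positivity
        linarith)
    exact inv_pos.mpr (by linarith)
  have hcmul : c' * ‖y τ‖ ^ (1/κ) ≤ c' * (2*(32*P)) ^ (1/κ) :=
    mul_le_mul_of_nonneg_left hρκ hc'pos.le
  linarith
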